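/- Let W ∈ ℝ^{d×n} be a matrix with nonnegative entries, let F be a nonempty finite subset of ℝ^n_+, and let 1 ≤ p ≤ ∞. For each i = 1,…,d, let x^i ∈ F attain max { W_{i·}x : x ∈ F }, and let r ∈ {1,…,d} satisfy ‖Wx^r‖_p = max_{1 ≤ i ≤ d} ‖Wx^i‖_p. Then max_{x ∈ F} ‖Wx‖_p ≤ d^{1/p} · ‖Wx^r‖_p (where d^{1/∞} is interpreted as 1); that is, x^r is a d^{1/p}-approximate maximizer of ‖Wx‖_p over F. -/

import Mathlib

open scoped ENNReal

/-- `d^{1/p}`-approximate `p`-norm maximization: for a nonnegative matrix `W`, a nonempty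
finite set `F` of nonnegative vectors, and `1 ≤ p ≤ ∞`, the point `x^r` achieving the best
`p`-norm `‖Wx^i‖_p` among the row maximizers `x^i` satisfies
`‖Wx‖_p ≤ d^{1/p} ‖Wx^r‖_p` for all `x ∈ F` (with `d^{1/∞} = 1`). -/
theorem pnorm_maximization_approximation
    (d n : ℕ) (p : ℝ≥0∞) [Fact (1 ≤ p)]
    (W : Matrix (Fin d) (Fin n) ℝ) (hW : ∀ i j, 0 ≤ W i j)
    (F : Finset (Fin n → ℝ)) (hFne : F.Nonempty)
    (hFpos : ∀ x ∈ F, ∀ j, 0 ≤ x j)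
    (xi : Fin d → (Fin n → ℝ)) (hxiF : ∀ i, xi i ∈ F)
    (hxiopt : ∀ i, ∀ x ∈ F, W.mulVec x i ≤ W.mulVec (xi i) i)
    (r : Fin d)
    (hr : ∀ i, ‖(WithLp.equiv p (Fin d → ℝ)).symm (W.mulVec (xi i))‖ ≤
               ‖(WithLp.equiv p (Fin d → ℝ)).symm (W.mulVec (xi r))‖) :
    ∀ x ∈ F,
      ‖(WithLp.equiv p (Fin d → ℝ)).symm (W.mulVec x)‖ ≤
        (d : ℝ) ^ (1 / p).toReal *
          ‖(WithLp.equiv p (Fin d → ℝ)).symm (W.mulVec (xi r))‖ := by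
  intro x hx
  set R := ‖(WithLp.equiv p (Fin d → ℝ)).symm (W.mulVec (xi r))‖ with hR
  have hR0 : 0 ≤ R := norm_nonneg _
  -- sup norm of W.mulVec x is ≤ R
  have hsup : ‖W.mulVec x‖ ≤ R := by
    rw [pi_norm_le_iff_of_nonneg hR0]
    intro i
    have h1 : W.mulVec x i ≤ W.mulVec (xi i) i := hxiopt i x hx
    have h0 : 0 ≤ W.mulVec x i := by
      unfold Matrix.mulVec dotProduct
      exact Finset.sum_nonneg fun j _ => mul_nonneg (hW i j) (hFpos x hx j)
    have h2 : W.mulVec (xi i) i ≤ ‖W.mulVec (xi i)‖ :=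
      le_trans (le_abs_self _) (norm_le_pi_norm (W.mulVec (xi i)) i)
    have h3 : ‖W.mulVec (xi i)‖ ≤
        ‖(WithLp.equiv p (Fin d → ℝ)).symm (W.mulVec (xi i))‖ := by
      have := (PiLp.lipschitzWith_ofLp p (fun _ : Fin d => ℝ)).dist_le_mul
        ((WithLp.equiv p (Fin d → ℝ)).symm (W.mulVec (xi i))) 0
      simpa [dist_zero_right] using this
    calc ‖W.mulVec x i‖ = W.mulVec x i := by rw [Real.norm_eq_abs, abs_of_nonneg h0]
      _ ≤ W.mulVec (xi i) i := h1
      _ ≤ ‖W.mulVec (xi i)‖ := h2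
      _ ≤ _ := h3
      _ ≤ R := hr i
  -- p-norm ≤ d^{1/p} * sup norm
  have hanti := (PiLp.antilipschitzWith_ofLp p (fun _ : Fin d => ℝ)).le_mul_dist
    ((WithLp.equiv p (Fin d → ℝ)).symm (W.mulVec x)) 0
  have hanti' : ‖(WithLp.equiv p (Fin d → ℝ)).symm (W.mulVec x)‖ ≤
      (d : ℝ) ^ (1 / p).toReal * ‖W.mulVec x‖ := by
    simpa [dist_zero_right, NNReal.coe_rpow] using hanti
  calc ‖(WithLp.equiv p (Fin d → ℝ)).symm (W.mulVec x)‖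
      ≤ (d : ℝ) ^ (1 / p).toReal * ‖W.mulVec x‖ := hanti'
    _ ≤ (d : ℝ) ^ (1 / p).toReal * R := by
        apply mul_le_mul_of_nonneg_left hsup
        positivity
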